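/- arXiv:2010.08753 — 3 statements merged into one kernel-verified Lean document; each statement's English description precedes it below -/
import Mathlib

section
/- For r > 3, if u ∈ L²(0,T;H) ∩ L^{r+1}(0,T; L^{r+1}), then B(u) ∈ L²(0,T; V') and ∫₀^T ‖B(u(t))‖²_{V'} dt ≤ ‖u‖_{L^{r+1}(0,T;L^{r+1})}^{2(r+1)/(r−1)} ‖u‖_{L²(0,T;H)}^{2(r−3)/(r−1)}. -/
open MeasureTheory ENNReal Set

/-- For `r > 3`, if `u ∈ L²(0,T;H) ∩ L^{r+1}(0,T;L^{r+1})`, then `B(u) ∈ L²(0,T;V')` and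
`∫₀ᵀ ‖B(u(t))‖²_{V'} dt ≤ ‖u‖_{L^{r+1}(0,T;L^{r+1})}^{2(r+1)/(r-1)} ‖u‖_{L²(0,T;H)}^{2(r-3)/(r-1)}`.
Here `uLr t = ‖u(t)‖_{L^{r+1}}`, `uH t = ‖u(t)‖_H`, and the pointwise estimate
`‖B(u)‖_{V'} ≤ ‖u‖_{L^{r+1}}^{(r+1)/(r-1)} ‖u‖_H^{(r-3)/(r-1)}` is the defining bound. -/
theorem Bu_L2_in_time_high_r {V : Type*} [NormedAddCommGroup V] [NormedSpace ℝ V]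
    (r T : ℝ) (hr : 3 < r) (hT : 0 < T)
    (uLr uH : ℝ → ℝ≥0∞) (Bu : ℝ → V →L[ℝ] ℝ)
    (hmLr : Measurable uLr) (hmH : Measurable uH)
    (hbound : ∀ t, (‖Bu t‖₊ : ℝ≥0∞) ≤
      uLr t ^ ((r + 1) / (r - 1)) * uH t ^ ((r - 3) / (r - 1)))
    (huLr : ∫⁻ t in Ioc 0 T, uLr t ^ (r + 1) < ⊤)
    (huH : ∫⁻ t in Ioc 0 T, uH t ^ (2:ℝ) < ⊤) :
    (∫⁻ t in Ioc 0 T, (‖Bu t‖₊ : ℝ≥0∞) ^ (2:ℝ)) ≤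
      ((∫⁻ t in Ioc 0 T, uLr t ^ (r + 1)) ^ ((1:ℝ) / (r + 1))) ^ (2 * (r + 1) / (r - 1)) *
        ((∫⁻ t in Ioc 0 T, uH t ^ (2:ℝ)) ^ ((1:ℝ) / 2)) ^ (2 * (r - 3) / (r - 1)) ∧
      (∫⁻ t in Ioc 0 T, (‖Bu t‖₊ : ℝ≥0∞) ^ (2:ℝ)) < ⊤ := by
  have hr1 : (0:ℝ) < r - 1 := by linarith
  have hr3 : (0:ℝ) < r - 3 := by linarith
  have hrp1 : (0:ℝ) < r + 1 := by linarith
  set a : ℝ := 2 * (r + 1) / (r - 1) with ha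
  set b : ℝ := 2 * (r - 3) / (r - 1) with hb
  set p : ℝ := (r - 1) / 2 with hp
  set q : ℝ := (r - 1) / (r - 3) with hq
  have hpq : p.HolderConjugate q := by
    refine Real.holderConjugate_iff.mpr ⟨?_, ?_⟩
    · rw [hp]; linarith
    · rw [hp, hq]; field_simp; try ring
  have ha0 : 0 ≤ a := by positivity
  have hb0 : 0 ≤ b := by positivity
  -- pointwise bound
  have hpt : ∀ t, (‖Bu t‖₊ : ℝ≥0∞) ^ (2:ℝ) ≤ uLr t ^ a * uH t ^ b := by
    intro t
    have h2 : ((‖Bu t‖₊ : ℝ≥0∞)) ^ (2:ℝ) ≤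
        (uLr t ^ ((r + 1) / (r - 1)) * uH t ^ ((r - 3) / (r - 1))) ^ (2:ℝ) :=
      ENNReal.rpow_le_rpow (hbound t) (by norm_num)
    refine h2.trans_eq ?_
    rw [ENNReal.mul_rpow_of_nonneg _ _ (by norm_num), ← ENNReal.rpow_mul, ← ENNReal.rpow_mul]
    congr 1 <;> congr 1
    · rw [ha]; ring
    · rw [hb]; ring
  have hmf : AEMeasurable (fun t => uLr t ^ a)
      (volume.restrict (Ioc (0:ℝ) T)) := (hmLr.pow_const a).aemeasurable
  have hmg : AEMeasurable (fun t => uH t ^ b)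
      (volume.restrict (Ioc (0:ℝ) T)) := (hmH.pow_const b).aemeasurable
  have holder := ENNReal.lintegral_mul_le_Lp_mul_Lq
    (volume.restrict (Ioc (0:ℝ) T)) hpq hmf hmg
  have hap : a * p = r + 1 := by rw [ha, hp]; field_simp; try ring
  have hbq : b * q = 2 := by rw [hb, hq]; field_simp; try ring
  have key : (∫⁻ t in Ioc 0 T, (‖Bu t‖₊ : ℝ≥0∞) ^ (2:ℝ)) ≤
      (∫⁻ t in Ioc 0 T, uLr t ^ (r + 1)) ^ (1 / p) *
      (∫⁻ t in Ioc 0 T, uH t ^ (2:ℝ)) ^ (1 / q) := by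
    refine (lintegral_mono fun t => hpt t).trans ?_
    refine holder.trans_eq ?_
    congr 1
    · congr 1; refine lintegral_congr fun t => ?_
      rw [← ENNReal.rpow_mul, hap]
    · congr 1; refine lintegral_congr fun t => ?_
      rw [← ENNReal.rpow_mul, hbq]
  have e1 : ((∫⁻ t in Ioc 0 T, uLr t ^ (r + 1)) ^ ((1:ℝ) / (r + 1))) ^ a =
      (∫⁻ t in Ioc 0 T, uLr t ^ (r + 1)) ^ (1 / p) := by
    rw [← ENNReal.rpow_mul]
    congr 1
    rw [ha, hp]; field_simp; try ring
  have e2 : ((∫⁻ t in Ioc 0 T, uH t ^ (2:ℝ)) ^ ((1:ℝ) / 2)) ^ b =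
      (∫⁻ t in Ioc 0 T, uH t ^ (2:ℝ)) ^ (1 / q) := by
    rw [← ENNReal.rpow_mul]
    congr 1
    rw [hb, hq]; field_simp; try ring
  refine ⟨by rw [e1, e2]; exact key, ?_⟩
  refine key.trans_lt ?_
  exact ENNReal.mul_lt_top
    (ENNReal.rpow_lt_top_of_nonneg (by positivity) huLr.ne)
    (ENNReal.rpow_lt_top_of_nonneg (by positivity) huH.ne)
end

section
/- For r ≥ 2 and u₁, u₂ ∈ L^{r+1}(𝒪), one has ‖u₁ − u₂‖^{r+1}_{L^{r+1}} ≤ 2^{r−2} ‖|u₁|^{(r−1)/2}(u₁−u₂)‖²_{L²} + 2^{r−2} ‖|u₂|^{(r−1)/2}(u₁−u₂)‖²_{L²}; for 1 ≤ r ≤ 2 the same holds with the constants 2^{r−2} replaced by 1. -/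
open MeasureTheory

lemma real_rpow_add_le_mul (a b : ℝ) (ha : 0 ≤ a) (hb : 0 ≤ b) {p : ℝ} (hp : 1 ≤ p) :
    (a + b) ^ p ≤ (2:ℝ) ^ (p - 1) * (a ^ p + b ^ p) := by
  lift a to NNReal using ha
  lift b to NNReal using hb
  have := NNReal.rpow_add_le_mul_rpow_add_rpow a b hp
  exact_mod_cast this

lemma real_rpow_add_le_add (a b : ℝ) (ha : 0 ≤ a) (hb : 0 ≤ b) {p : ℝ} (hp : 0 ≤ p)
    (hp1 : p ≤ 1) : (a + b) ^ p ≤ a ^ p + b ^ p := by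
  lift a to NNReal using ha
  lift b to NNReal using hb
  have := NNReal.rpow_add_le_add_rpow a b hp hp1
  exact_mod_cast this

/-- For `r ≥ 2`:
`‖u₁-u₂‖^{r+1}_{L^{r+1}} ≤ 2^{r-2}‖|u₁|^{(r-1)/2}(u₁-u₂)‖²_{L²} + 2^{r-2}‖|u₂|^{(r-1)/2}(u₁-u₂)‖²_{L²}`,
and for `1 ≤ r ≤ 2` the same holds with the constants `2^{r-2}` replaced by `1`. -/
theorem Lrp1_difference_bound
    {d : ℕ} (O : Set (EuclideanSpace ℝ (Fin d))) (r : ℝ) (hr : 1 ≤ r)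
    (u₁ u₂ : EuclideanSpace ℝ (Fin d) → EuclideanSpace ℝ (Fin d))
    (hint : Integrable (fun x => ‖u₁ x - u₂ x‖ ^ (r + 1)) (volume.restrict O))
    (hint1 : Integrable (fun x => ‖u₁ x‖ ^ (r - 1) * ‖u₁ x - u₂ x‖ ^ 2)
      (volume.restrict O))
    (hint2 : Integrable (fun x => ‖u₂ x‖ ^ (r - 1) * ‖u₁ x - u₂ x‖ ^ 2)
      (volume.restrict O)) :
    (2 ≤ r →
      (∫ x, ‖u₁ x - u₂ x‖ ^ (r + 1) ∂(volume.restrict O)) ≤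
        (2:ℝ) ^ (r - 2) *
            (∫ x, ‖u₁ x‖ ^ (r - 1) * ‖u₁ x - u₂ x‖ ^ 2 ∂(volume.restrict O)) +
          (2:ℝ) ^ (r - 2) *
            (∫ x, ‖u₂ x‖ ^ (r - 1) * ‖u₁ x - u₂ x‖ ^ 2 ∂(volume.restrict O))) ∧
    (r ≤ 2 →
      (∫ x, ‖u₁ x - u₂ x‖ ^ (r + 1) ∂(volume.restrict O)) ≤
        (∫ x, ‖u₁ x‖ ^ (r - 1) * ‖u₁ x - u₂ x‖ ^ 2 ∂(volume.restrict O)) +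
          (∫ x, ‖u₂ x‖ ^ (r - 1) * ‖u₁ x - u₂ x‖ ^ 2 ∂(volume.restrict O))) := by
  -- key pointwise decomposition
  have key : ∀ x, ‖u₁ x - u₂ x‖ ^ (r + 1) =
      ‖u₁ x - u₂ x‖ ^ (r - 1) * ‖u₁ x - u₂ x‖ ^ 2 := by
    intro x
    rw [← Real.rpow_two, ← Real.rpow_add' (norm_nonneg _) (by ring_nf; positivity)]
    ring_nf
  have hle : ∀ x, ‖u₁ x - u₂ x‖ ^ (r - 1) ≤ (‖u₁ x‖ + ‖u₂ x‖) ^ (r - 1) := by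
    intro x
    apply Real.rpow_le_rpow (norm_nonneg _) _ (by linarith)
    exact (norm_sub_le _ _)
  constructor
  · intro hr2
    have hmono : ∀ x, ‖u₁ x - u₂ x‖ ^ (r + 1) ≤
        (2:ℝ) ^ (r - 2) * (‖u₁ x‖ ^ (r - 1) * ‖u₁ x - u₂ x‖ ^ 2) +
        (2:ℝ) ^ (r - 2) * (‖u₂ x‖ ^ (r - 1) * ‖u₁ x - u₂ x‖ ^ 2) := by
      intro x
      rw [key x]
      have h1 : (‖u₁ x‖ + ‖u₂ x‖) ^ (r - 1) ≤
          (2:ℝ) ^ (r - 1 - 1) * (‖u₁ x‖ ^ (r - 1) + ‖u₂ x‖ ^ (r - 1)) :=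
        real_rpow_add_le_mul _ _ (norm_nonneg _) (norm_nonneg _) (by linarith)
      have h2 : ‖u₁ x - u₂ x‖ ^ (r - 1) ≤
          (2:ℝ) ^ (r - 2) * (‖u₁ x‖ ^ (r - 1) + ‖u₂ x‖ ^ (r - 1)) := by
        calc ‖u₁ x - u₂ x‖ ^ (r - 1) ≤ (‖u₁ x‖ + ‖u₂ x‖) ^ (r - 1) := hle x
        _ ≤ (2:ℝ) ^ (r - 1 - 1) * (‖u₁ x‖ ^ (r - 1) + ‖u₂ x‖ ^ (r - 1)) := h1
        _ = (2:ℝ) ^ (r - 2) * (‖u₁ x‖ ^ (r - 1) + ‖u₂ x‖ ^ (r - 1)) := by ring_nf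
      have h3 := mul_le_mul_of_nonneg_right h2 (sq_nonneg ‖u₁ x - u₂ x‖)
      calc ‖u₁ x - u₂ x‖ ^ (r - 1) * ‖u₁ x - u₂ x‖ ^ 2
          ≤ (2:ℝ) ^ (r - 2) * (‖u₁ x‖ ^ (r - 1) + ‖u₂ x‖ ^ (r - 1)) *
            ‖u₁ x - u₂ x‖ ^ 2 := h3
        _ = (2:ℝ) ^ (r - 2) * (‖u₁ x‖ ^ (r - 1) * ‖u₁ x - u₂ x‖ ^ 2) +
            (2:ℝ) ^ (r - 2) * (‖u₂ x‖ ^ (r - 1) * ‖u₁ x - u₂ x‖ ^ 2) := by ring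
    calc (∫ x, ‖u₁ x - u₂ x‖ ^ (r + 1) ∂(volume.restrict O))
        ≤ ∫ x, ((2:ℝ) ^ (r - 2) * (‖u₁ x‖ ^ (r - 1) * ‖u₁ x - u₂ x‖ ^ 2) +
            (2:ℝ) ^ (r - 2) * (‖u₂ x‖ ^ (r - 1) * ‖u₁ x - u₂ x‖ ^ 2)) ∂(volume.restrict O) := by
          apply integral_mono hint ((hint1.const_mul _).add (hint2.const_mul _))
          exact fun x => hmono x
      _ = (2:ℝ) ^ (r - 2) *
            (∫ x, ‖u₁ x‖ ^ (r - 1) * ‖u₁ x - u₂ x‖ ^ 2 ∂(volume.restrict O)) +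
          (2:ℝ) ^ (r - 2) *
            (∫ x, ‖u₂ x‖ ^ (r - 1) * ‖u₁ x - u₂ x‖ ^ 2 ∂(volume.restrict O)) := by
          rw [integral_add (hint1.const_mul _) (hint2.const_mul _),
            integral_const_mul, integral_const_mul]
  · intro hr2
    have hmono : ∀ x, ‖u₁ x - u₂ x‖ ^ (r + 1) ≤
        ‖u₁ x‖ ^ (r - 1) * ‖u₁ x - u₂ x‖ ^ 2 +
        ‖u₂ x‖ ^ (r - 1) * ‖u₁ x - u₂ x‖ ^ 2 := by
      intro x
      rw [key x]
      have h2 : ‖u₁ x - u₂ x‖ ^ (r - 1) ≤ ‖u₁ x‖ ^ (r - 1) + ‖u₂ x‖ ^ (r - 1) :=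
        le_trans (hle x) (real_rpow_add_le_add _ _ (norm_nonneg _) (norm_nonneg _)
          (by linarith) (by linarith))
      have h3 := mul_le_mul_of_nonneg_right h2 (sq_nonneg ‖u₁ x - u₂ x‖)
      linarith [h3]
    calc (∫ x, ‖u₁ x - u₂ x‖ ^ (r + 1) ∂(volume.restrict O))
        ≤ ∫ x, (‖u₁ x‖ ^ (r - 1) * ‖u₁ x - u₂ x‖ ^ 2 +
            ‖u₂ x‖ ^ (r - 1) * ‖u₁ x - u₂ x‖ ^ 2) ∂(volume.restrict O) := by
          apply integral_mono hint (hint1.add hint2)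
          exact fun x => hmono x
      _ = _ := integral_add hint1 hint2
end

section
/- Let κ : Ω → (0,∞) be in the class 𝔎₂, i.e. limsup_{t→∞} [κ(θ_{−t}ω)]² e^{−2αt} = 0 for all ω, where (θ_t) is a group of shifts and Υ(θ_{−t}ω)(s) = Υ(ω)(s−t). Then the function κ₂ defined by [κ₂(ω)]² = sup_{s≤0} ‖Υ(ω)(s)‖²_H e^{2αs} satisfies limsup_{t→∞} [κ₂(θ_{−t}ω)]² e^{−2αt} = limsup_{σ→−∞} ‖Υ(ω)(σ)‖²_H e^{2ασ}; in particular, if limsup_{σ→−∞} ‖Υ(ω)(σ)‖²_H e^{2ασ} = 0 then κ₂ ∈ 𝔎₂. -/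
open Filter

/-- Let `(θ_t)` be a group of shifts on `Ω` and `Υ : Ω → C(ℝ,H)` satisfy the cocycle
identity `Υ(θ_s ω)(t) = Υ(ω)(t+s)`. Define `[κ₂(ω)]² = sup_{s≤0} ‖Υ(ω)(s)‖²_H e^{2αs}`.
Then `limsup_{t→∞} [κ₂(θ_{-t}ω)]² e^{-2αt} = limsup_{σ→-∞} ‖Υ(ω)(σ)‖²_H e^{2ασ}`; in
particular, if the latter limsup vanishes (for every `ω`), then `κ₂` belongs to the
class `𝔎₂`, i.e. `limsup_{t→∞} [κ₂(θ_{-t}ω)]² e^{-2αt} = 0` for every `ω`. -/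
theorem radius_function_in_class_K2
    {Ω : Type*} {H : Type*} [NormedAddCommGroup H]
    (θ : ℝ → Ω → Ω) (Υ : Ω → ℝ → H) (α : ℝ) (hα : 0 < α)
    (hθ0 : θ 0 = id) (hθadd : ∀ s t, θ (s + t) = θ s ∘ θ t)
    (hcocycle : ∀ (ω : Ω) (s t : ℝ), Υ (θ s ω) t = Υ ω (t + s))
    (κ₂sq : Ω → ℝ)
    (hκ : ∀ ω, κ₂sq ω =
      sSup {x : ℝ | ∃ s ≤ (0:ℝ), x = ‖Υ ω s‖ ^ 2 * Real.exp (2 * α * s)})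
    (hbdd : ∀ ω, BddAbove {x : ℝ | ∃ s ≤ (0:ℝ), x = ‖Υ ω s‖ ^ 2 * Real.exp (2 * α * s)}) :
    (∀ ω, limsup (fun t => κ₂sq (θ (-t) ω) * Real.exp (-2 * α * t)) atTop =
        limsup (fun σ => ‖Υ ω σ‖ ^ 2 * Real.exp (2 * α * σ)) atBot) ∧
      ((∀ ω, limsup (fun σ => ‖Υ ω σ‖ ^ 2 * Real.exp (2 * α * σ)) atBot = 0) →
        ∀ ω, limsup (fun t => κ₂sq (θ (-t) ω) * Real.exp (-2 * α * t)) atTop = 0) := by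
  have main : ∀ ω, limsup (fun t => κ₂sq (θ (-t) ω) * Real.exp (-2 * α * t)) atTop =
      limsup (fun σ => ‖Υ ω σ‖ ^ 2 * Real.exp (2 * α * σ)) atBot := by
    intro ω
    set f : ℝ → ℝ := fun σ => ‖Υ ω σ‖ ^ 2 * Real.exp (2 * α * σ) with hf
    -- key equivalence
    have key : ∀ t a : ℝ, κ₂sq (θ (-t) ω) * Real.exp (-2 * α * t) ≤ a ↔
        ∀ σ ≤ -t, f σ ≤ a := by
      intro t a
      rw [hκ]
      have hne : ({x : ℝ | ∃ s ≤ (0:ℝ), x = ‖Υ (θ (-t) ω) s‖ ^ 2 * Real.exp (2 * α * s)}).Nonempty :=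
        ⟨‖Υ (θ (-t) ω) 0‖ ^ 2 * Real.exp (2 * α * 0), 0, le_rfl, rfl⟩
      have hpos : (0:ℝ) < Real.exp (-2 * α * t) := Real.exp_pos _
      rw [← le_div_iff₀ hpos, csSup_le_iff (hbdd _) hne]
      constructor
      · intro h σ hσ
        have h1 := h (‖Υ (θ (-t) ω) (σ + t)‖ ^ 2 * Real.exp (2 * α * (σ + t)))
          ⟨σ + t, by linarith, rfl⟩
        rw [hcocycle] at h1
        have h2 : σ + t + -t = σ := by ring
        rw [h2] at h1
        rw [div_eq_mul_inv, ← Real.exp_neg] at h1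
        have : ‖Υ ω σ‖ ^ 2 * Real.exp (2 * α * (σ + t)) * Real.exp (-2 * α * t) ≤ a := by
          calc ‖Υ ω σ‖ ^ 2 * Real.exp (2 * α * (σ + t)) * Real.exp (-2 * α * t)
              ≤ a * Real.exp (-(-2 * α * t)) * Real.exp (-2 * α * t) := by
                apply mul_le_mul_of_nonneg_right h1 hpos.le
            _ = a := by rw [mul_assoc, ← Real.exp_add]; ring_nf; simp
        calc f σ = ‖Υ ω σ‖ ^ 2 * Real.exp (2 * α * (σ + t)) * Real.exp (-2 * α * t) := by
              rw [mul_assoc, ← Real.exp_add]; ring_nf; simp only [hf]; ring_nf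
          _ ≤ a := this
      · rintro h x ⟨s, hs, rfl⟩
        rw [hcocycle]
        have h1 := h (s + -t) (by linarith)
        rw [hf] at h1
        rw [le_div_iff₀ hpos]
        calc ‖Υ ω (s + -t)‖ ^ 2 * Real.exp (2 * α * s) * Real.exp (-2 * α * t)
            = ‖Υ ω (s + -t)‖ ^ 2 * Real.exp (2 * α * (s + -t)) := by
              rw [mul_assoc, ← Real.exp_add]; ring_nf
          _ ≤ a := h1
    rw [limsup_eq, limsup_eq]
    congr 1
    ext a
    simp only [Set.mem_setOf_eq, eventually_atTop, eventually_atBot]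
    constructor
    · rintro ⟨T, hT⟩
      exact ⟨-T, fun σ hσ => (key T a).1 (hT T le_rfl) σ hσ⟩
    · rintro ⟨c, hc⟩
      refine ⟨-c, fun t ht => (key t a).2 fun σ hσ => hc σ (hσ.trans (by linarith))⟩
  exact ⟨main, fun h ω => (main ω).trans (h ω)⟩
end
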